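/- arXiv:2202.10054 — 5 statements merged into one kernel-verified Lean document; each statement's English description precedes it below -/
import Mathlib

section
/- Let X ∈ ℝ^{n×d}, Y ∈ ℝ^n, let v : [0,∞) → ℝ^k be any curve, and let B : [0,∞) → ℝ^{k×d} be differentiable with B'(t) = −2 v(t) (X B(t)ᵀ v(t) − Y)ᵀ X for all t ≥ 0. Then for every x ∈ ℝ^d with X x = 0 (equivalently, x orthogonal to the span of the rows of X) and every t ≥ 0, B(t) x = B(0) x. -/
open Matrix

attribute [local instance] Matrix.normedAddCommGroup Matrix.normedSpace

/-- along the fine-tuning gradient-flow dynamics for the feature extractor,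
the features `B(t) x` of points `x` perpendicular to the span of the training data
(`X x = 0`) do not change. -/
theorem stmt_2 {n d k : ℕ} (X : Matrix (Fin n) (Fin d) ℝ) (Y : Fin n → ℝ)
    (v : ℝ → Fin k → ℝ) (B : ℝ → Matrix (Fin k) (Fin d) ℝ)
    (hB : ∀ t : ℝ, 0 ≤ t →
      HasDerivAt B
        ((-2 : ℝ) • Matrix.vecMulVec (v t)
          (Matrix.vecMul (X.mulVec ((B t)ᵀ.mulVec (v t)) - Y) X)) t) :
    ∀ x : Fin d → ℝ, X.mulVec x = 0 → ∀ t : ℝ, 0 ≤ t → (B t).mulVec x = (B 0).mulVec x := by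
  intro x hx t ht
  -- the linear map `M ↦ M.mulVec x` as a continuous linear map
  let L : Matrix (Fin k) (Fin d) ℝ →ₗ[ℝ] (Fin k → ℝ) :=
    { toFun := fun M => M.mulVec x
      map_add' := fun M N => Matrix.add_mulVec M N x
      map_smul' := fun c M => (Matrix.smul_mulVec c M x) }
  have hderiv : ∀ s : ℝ, 0 ≤ s → HasDerivAt (fun u => (B u).mulVec x) 0 s := by
    intro s hs
    have h := (L.toContinuousLinearMap.hasFDerivAt).comp_hasDerivAt s (hB s hs)
    have hz : L.toContinuousLinearMap ((-2 : ℝ) • Matrix.vecMulVec (v s)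
        (Matrix.vecMul (X.mulVec ((B s)ᵀ.mulVec (v s)) - Y) X)) = 0 := by
      have key : (Matrix.vecMul (X.mulVec ((B s)ᵀ.mulVec (v s)) - Y) X) ⬝ᵥ x = 0 := by
        rw [← Matrix.dotProduct_mulVec, hx, dotProduct_zero]
      show ((-2 : ℝ) • Matrix.vecMulVec (v s)
        (Matrix.vecMul (X.mulVec ((B s)ᵀ.mulVec (v s)) - Y) X)).mulVec x = 0
      rw [Matrix.smul_mulVec]
      funext i
      have h1 : (Matrix.vecMulVec (v s)
          (Matrix.vecMul (X.mulVec ((B s)ᵀ.mulVec (v s)) - Y) X)).mulVec x i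
          = v s i * ((Matrix.vecMul (X.mulVec ((B s)ᵀ.mulVec (v s)) - Y) X) ⬝ᵥ x) := by
        simp [Matrix.vecMulVec, Matrix.mulVec, dotProduct, Finset.mul_sum, mul_assoc]
      simp only [Pi.smul_apply, h1, key, mul_zero, smul_zero, Pi.zero_apply]
    replace h := h.congr_deriv hz
    exact h
  have hcont : ContinuousOn (fun u => (B u).mulVec x) (Set.Icc 0 t) := fun s hs =>
    ((hderiv s hs.1).continuousAt).continuousWithinAt
  have := constant_of_has_deriv_right_zero hcont
    (fun s hs => ((hderiv s hs.1).hasDerivWithinAt)) t (Set.mem_Icc.2 ⟨ht, le_refl t⟩)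
  exact this
end

section
/- Let X ∈ ℝ^{n×d} and Y ∈ ℝ^n, and let (v(t), B(t)) be a fine-tuning gradient-flow trajectory (differentiable curves v : [0,∞) → ℝ^k, B : [0,∞) → ℝ^{k×d} satisfying v'(t) = −2 B(t) Xᵀ (X B(t)ᵀ v(t) − Y) and B'(t) = −2 v(t) (X B(t)ᵀ v(t) − Y)ᵀ X). Then for all t ≥ 0: v(0) v(0)ᵀ − B(0) B(0)ᵀ = v(t) v(t)ᵀ − B(t) B(t)ᵀ. -/
open Matrix

attribute [local instance] Matrix.normedAddCommGroup Matrix.normedSpace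

/-- Fine-tuning gradient flow trajectory for the loss `‖X Bᵀ v − Y‖₂²`:
`v'(t) = −2 B(t) Xᵀ (X B(t)ᵀ v(t) − Y)` and `B'(t) = −2 v(t) (X B(t)ᵀ v(t) − Y)ᵀ X`. -/
def IsFTTrajectory {n d k : ℕ} (X : Matrix (Fin n) (Fin d) ℝ) (Y : Fin n → ℝ)
    (v : ℝ → Fin k → ℝ) (B : ℝ → Matrix (Fin k) (Fin d) ℝ) : Prop :=
  ∀ t : ℝ, 0 ≤ t →
    HasDerivAt v ((-2 : ℝ) • (B t).mulVec (Xᵀ.mulVec (X.mulVec ((B t)ᵀ.mulVec (v t)) - Y))) t ∧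
    HasDerivAt B
      ((-2 : ℝ) • Matrix.vecMulVec (v t)
        (Matrix.vecMul (X.mulVec ((B t)ᵀ.mulVec (v t)) - Y) X)) t

/-- balancedness invariant: `v(0) v(0)ᵀ − B(0) B(0)ᵀ = v(t) v(t)ᵀ − B(t) B(t)ᵀ`
along any fine-tuning gradient-flow trajectory. -/
theorem stmt_3 {n d k : ℕ} (X : Matrix (Fin n) (Fin d) ℝ) (Y : Fin n → ℝ)
    (v : ℝ → Fin k → ℝ) (B : ℝ → Matrix (Fin k) (Fin d) ℝ)
    (htraj : IsFTTrajectory X Y v B) :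
    ∀ t : ℝ, 0 ≤ t →
      Matrix.vecMulVec (v 0) (v 0) - B 0 * (B 0)ᵀ =
        Matrix.vecMulVec (v t) (v t) - B t * (B t)ᵀ := by
  intro t ht
  ext i j
  simp only [Matrix.sub_apply, Matrix.vecMulVec_apply, Matrix.mul_apply, Matrix.transpose_apply]
  set g : ℝ → ℝ := fun s => v s i * v s j - ∑ l, B s i l * B s j l with hg
  have key : ∀ s : ℝ, 0 ≤ s → HasDerivAt g 0 s := by
    intro s hs
    obtain ⟨hv, hB⟩ := htraj s hs
    set r : Fin n → ℝ := X.mulVec ((B s)ᵀ.mulVec (v s)) - Y with hr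
    set w : Fin d → ℝ := Xᵀ.mulVec r with hw
    set q : Fin d → ℝ := Matrix.vecMul r X with hq
    have hvi : HasDerivAt (fun τ => v τ i) (((-2 : ℝ) • (B s).mulVec w) i) s :=
      hasDerivAt_pi.mp hv i
    have hvj : HasDerivAt (fun τ => v τ j) (((-2 : ℝ) • (B s).mulVec w) j) s :=
      hasDerivAt_pi.mp hv j
    have hBi : ∀ l, HasDerivAt (fun τ => B τ i l)
        (((-2 : ℝ) • Matrix.vecMulVec (v s) q) i l) s := fun l =>
      hasDerivAt_pi.mp (hasDerivAt_pi.mp hB i) l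
    have hBj : ∀ l, HasDerivAt (fun τ => B τ j l)
        (((-2 : ℝ) • Matrix.vecMulVec (v s) q) j l) s := fun l =>
      hasDerivAt_pi.mp (hasDerivAt_pi.mp hB j) l
    have hgd : HasDerivAt g
        (((-2 : ℝ) • (B s).mulVec w) i * v s j + v s i * ((-2 : ℝ) • (B s).mulVec w) j -
          ∑ l, (((-2 : ℝ) • Matrix.vecMulVec (v s) q) i l * B s j l +
            B s i l * ((-2 : ℝ) • Matrix.vecMulVec (v s) q) j l)) s :=
      (hvi.mul hvj).sub (HasDerivAt.fun_sum fun l _ => (hBi l).mul (hBj l))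
    have hwq : ∀ l, w l = q l := by
      intro l
      simp [hw, hq, Matrix.mulVec, Matrix.vecMul, dotProduct, Matrix.transpose_apply,
        mul_comm]
    convert hgd using 1
    simp only [Pi.smul_apply, Matrix.smul_apply, Matrix.mulVec, Matrix.vecMulVec_apply,
      smul_eq_mul, dotProduct, funext hwq]
    simp only [Finset.mul_sum, Finset.sum_mul]
    rw [← Finset.sum_add_distrib]
    rw [eq_comm, sub_eq_zero]
    exact Finset.sum_congr rfl fun l _ => by ring
  have cont : ContinuousOn g (Set.Icc 0 t) := fun s hs =>
    (key s hs.1).continuousAt.continuousWithinAt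
  have deriv0 : ∀ s ∈ Set.Ico (0 : ℝ) t, HasDerivWithinAt g 0 (Set.Ici s) s := fun s hs =>
    (key s hs.1).hasDerivWithinAt
  have := constant_of_has_deriv_right_zero cont deriv0 t (Set.right_mem_Icc.2 ht)
  simpa [hg] using this.symm
end

section
/- Let R and S be subspaces of ℝ^d with dim R ≤ dim S, and let c = cangle(R, S). Then for every r ∈ R with ‖r‖₂ = c, there exists s ∈ S with Π_R(s) = r and ‖s‖₂ ≤ 1, where Π_R denotes the orthogonal projection onto R. -/
open scoped RealInnerProductSpace


noncomputable section

/-- Cosine of the largest principal angle between subspaces `R` and `T` of `ℝ^d`: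
`cangle R T = inf {‖Π_T r‖ : r ∈ R, ‖r‖ = 1}` (equal to `0` when `R = {0}`, since `sInf ∅ = 0`). -/
def cangle {d : ℕ} (R T : Submodule ℝ (EuclideanSpace ℝ (Fin d))) : ℝ :=
  sInf {c | ∃ r ∈ R, ‖r‖ = 1 ∧ c = ‖(Submodule.orthogonalProjectionOnto T r : EuclideanSpace ℝ (Fin d))‖}

/-- The lower bound property of `cangle`. -/
lemma cangle_le {d : ℕ} (R S : Submodule ℝ (EuclideanSpace ℝ (Fin d)))
    {x : EuclideanSpace ℝ (Fin d)} (hx : x ∈ R) :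
    cangle R S * ‖x‖ ≤ ‖(Submodule.orthogonalProjectionOnto S x : EuclideanSpace ℝ (Fin d))‖ := by
  rcases eq_or_ne x 0 with rfl | hx0
  · simp
  have hxn : (0:ℝ) < ‖x‖ := norm_pos_iff.mpr hx0
  set u := ‖x‖⁻¹ • x with hu
  have huR : u ∈ R := R.smul_mem _ hx
  have hun : ‖u‖ = 1 := by
    rw [hu, norm_smul, norm_inv, norm_norm, inv_mul_cancel₀ hxn.ne']
  have hbdd : BddBelow {c | ∃ r ∈ R, ‖r‖ = 1 ∧
      c = ‖(Submodule.orthogonalProjectionOnto S r : EuclideanSpace ℝ (Fin d))‖} := by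
    refine ⟨0, ?_⟩
    rintro c ⟨r, _, _, rfl⟩
    exact norm_nonneg _
  have hle : cangle R S ≤ ‖(Submodule.orthogonalProjectionOnto S u : EuclideanSpace ℝ (Fin d))‖ :=
    csInf_le hbdd ⟨u, huR, hun, rfl⟩
  have hpu : ‖(Submodule.orthogonalProjectionOnto S u : EuclideanSpace ℝ (Fin d))‖
      = ‖x‖⁻¹ * ‖(Submodule.orthogonalProjectionOnto S x : EuclideanSpace ℝ (Fin d))‖ := by
    rw [hu, map_smul]
    simp [norm_smul, abs_of_pos (inv_pos.mpr hxn)]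
  calc cangle R S * ‖x‖ ≤ (‖x‖⁻¹ * ‖(Submodule.orthogonalProjectionOnto S x : EuclideanSpace ℝ (Fin d))‖) * ‖x‖ := by
        nlinarith [hle, hpu]
    _ = ‖(Submodule.orthogonalProjectionOnto S x : EuclideanSpace ℝ (Fin d))‖ := by
        field_simp

/-- if `c = cangle(R, S)` with `dim R ≤ dim S`, then every `r ∈ R` of norm `c`
is the orthogonal projection onto `R` of some `s ∈ S` with `‖s‖ ≤ 1`. -/
theorem stmt_5 {d : ℕ} (R S : Submodule ℝ (EuclideanSpace ℝ (Fin d)))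
    (hdim : Module.finrank ℝ R ≤ Module.finrank ℝ S) :
    ∀ r ∈ R, ‖r‖ = cangle R S →
      ∃ s ∈ S, (Submodule.orthogonalProjectionOnto R s : EuclideanSpace ℝ (Fin d)) = r ∧ ‖s‖ ≤ 1 := by
  intro r hr hrc
  set c := cangle R S with hc
  by_cases hr0 : r = 0
  · exact ⟨0, S.zero_mem, by simp [hr0], by simp⟩
  have hcpos : 0 < c := by
    rw [← hrc]; exact norm_pos_iff.mpr hr0
  -- the map f : R → R, x ↦ Π_R (Π_S x)
  set f : R →ₗ[ℝ] R :=
    (Submodule.orthogonalProjectionOnto R).toLinearMap ∘ₗ S.subtype ∘ₗ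
      (Submodule.orthogonalProjectionOnto S).toLinearMap ∘ₗ R.subtype with hf
  have hfval : ∀ x : R, (f x : EuclideanSpace ℝ (Fin d))
      = (Submodule.orthogonalProjectionOnto R ((Submodule.orthogonalProjectionOnto S (x : EuclideanSpace ℝ (Fin d)) : EuclideanSpace ℝ (Fin d))) : EuclideanSpace ℝ (Fin d)) := fun x => rfl
  -- inner product identity : ⟪f x, x⟫ = ‖Π_S x‖ ^ 2
  have hinner : ∀ x : R, (⟪(f x : EuclideanSpace ℝ (Fin d)), (x : EuclideanSpace ℝ (Fin d))⟫) = ‖(Submodule.orthogonalProjectionOnto S (x : EuclideanSpace ℝ (Fin d)) : EuclideanSpace ℝ (Fin d))‖ ^ 2 := by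
    intro x
    set y := (Submodule.orthogonalProjectionOnto S (x : EuclideanSpace ℝ (Fin d)) : EuclideanSpace ℝ (Fin d)) with hy
    have h1 : ⟪y - (Submodule.orthogonalProjectionOnto R y : EuclideanSpace ℝ (Fin d)), (x : EuclideanSpace ℝ (Fin d))⟫ = 0 :=
      Submodule.starProjection_inner_eq_zero (K := R) y (x : EuclideanSpace ℝ (Fin d)) x.2
    have h2 : ⟪(x : EuclideanSpace ℝ (Fin d)) - y, y⟫ = 0 :=
      Submodule.starProjection_inner_eq_zero (K := S) (x : EuclideanSpace ℝ (Fin d)) y (SetLike.coe_mem _)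
    have h1' : ⟪(Submodule.orthogonalProjectionOnto R y : EuclideanSpace ℝ (Fin d)), (x : EuclideanSpace ℝ (Fin d))⟫ = ⟪y, (x : EuclideanSpace ℝ (Fin d))⟫ := by
      have := h1; rw [inner_sub_left] at this; linarith
    have h2' : ⟪(x : EuclideanSpace ℝ (Fin d)), y⟫ = ⟪y, y⟫ := by
      have := h2; rw [inner_sub_left] at this; linarith
    rw [hfval, h1', real_inner_comm, h2', real_inner_self_eq_norm_sq]
  -- f is injective
  have hinj : Function.Injective f := by
    rw [injective_iff_map_eq_zero]
    intro x hx
    have h0 : ‖(Submodule.orthogonalProjectionOnto S (x : EuclideanSpace ℝ (Fin d)) : EuclideanSpace ℝ (Fin d))‖ ^ 2 = 0 := by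
      rw [← hinner x, hx]; simp
    have h1 : c * ‖(x : EuclideanSpace ℝ (Fin d))‖ ≤ 0 := by
      have := cangle_le R S x.2
      nlinarith [norm_nonneg ((Submodule.orthogonalProjectionOnto S (x : EuclideanSpace ℝ (Fin d)) : EuclideanSpace ℝ (Fin d)))]
    have : ‖(x : EuclideanSpace ℝ (Fin d))‖ = 0 := le_antisymm (by nlinarith) (norm_nonneg _)
    ext1
    simpa using this
  have hsurj : Function.Surjective f := (LinearMap.injective_iff_surjective).mp hinj
  obtain ⟨w, hw⟩ := hsurj ⟨r, hr⟩
  set s := (Submodule.orthogonalProjectionOnto S ((w : EuclideanSpace ℝ (Fin d))) : EuclideanSpace ℝ (Fin d)) with hs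
  have hsS : s ∈ S := SetLike.coe_mem _
  have hproj : (Submodule.orthogonalProjectionOnto R s : EuclideanSpace ℝ (Fin d)) = r := by
    rw [← hfval, hw]
  -- ⟪s, s⟫ = ⟪w, s⟫
  have hss : ⟪s, s⟫ = ⟪(w : EuclideanSpace ℝ (Fin d)), s⟫ := by
    have h2 : ⟪(w : EuclideanSpace ℝ (Fin d)) - s, s⟫ = 0 :=
      Submodule.starProjection_inner_eq_zero (K := S) (w : EuclideanSpace ℝ (Fin d)) s hsS
    rw [inner_sub_left] at h2
    linarith
  -- ⟪w, s⟫ = ⟪w, r⟫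
  have hws : ⟪(w : EuclideanSpace ℝ (Fin d)), s⟫ = ⟪(w : EuclideanSpace ℝ (Fin d)), r⟫ := by
    have h1 : ⟪s - (Submodule.orthogonalProjectionOnto R s : EuclideanSpace ℝ (Fin d)), (w : EuclideanSpace ℝ (Fin d))⟫ = 0 :=
      Submodule.starProjection_inner_eq_zero (K := R) s (w : EuclideanSpace ℝ (Fin d)) w.2
    rw [inner_sub_left, hproj] at h1
    have e1 : ⟪(w : EuclideanSpace ℝ (Fin d)), s⟫ = ⟪s, (w : EuclideanSpace ℝ (Fin d))⟫ :=
      real_inner_comm _ _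
    have e2 : ⟪(w : EuclideanSpace ℝ (Fin d)), r⟫ = ⟪r, (w : EuclideanSpace ℝ (Fin d))⟫ :=
      real_inner_comm _ _
    rw [e1, e2]
    linarith
  have hnorm2 : ‖s‖ ^ 2 = ⟪(w : EuclideanSpace ℝ (Fin d)), r⟫ := by
    rw [← real_inner_self_eq_norm_sq, hss, hws]
  have hub : ‖s‖ ^ 2 ≤ c * ‖(w : EuclideanSpace ℝ (Fin d))‖ := by
    calc ‖s‖ ^ 2 = ⟪(w : EuclideanSpace ℝ (Fin d)), r⟫ := hnorm2
      _ ≤ ‖(w : EuclideanSpace ℝ (Fin d))‖ * ‖r‖ := real_inner_le_norm _ _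
      _ = c * ‖(w : EuclideanSpace ℝ (Fin d))‖ := by rw [hrc]; ring
  have hlb : c * ‖(w : EuclideanSpace ℝ (Fin d))‖ ≤ ‖s‖ := cangle_le R S w.2
  refine ⟨s, hsS, hproj, ?_⟩
  nlinarith [norm_nonneg s]
end
end

section
/- There exists a universal constant c > 0 such that for every a > 0, every ν ≥ 0, and every δ ∈ [0, 1], if u is a real random variable with the Gaussian distribution N(0, ν²) (interpreted as the Dirac mass at 0 when ν = 0), then P(|u − a| ≤ c δ a) ≤ δ. -/
open ProbabilityTheory MeasureTheory Real

lemma stmt_10_aux (a : ℝ) (ha : 0 < a) (s : ℝ) (hs : 0 < s) :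
    a * rexp (-a ^ 2 / (8 * s ^ 2)) ≤ Real.sqrt (2 * Real.pi) * s := by
  set c := Real.sqrt (2 * Real.pi) with hc
  have hc2 : Real.sqrt 2 ≤ c := by
    apply Real.sqrt_le_sqrt
    nlinarith [Real.pi_gt_three]
  have hsq2 : Real.sqrt 2 ^ 2 = 2 := Real.sq_sqrt (by norm_num)
  have hsq2n : 0 ≤ Real.sqrt 2 := Real.sqrt_nonneg 2
  have hE : 1 + a ^ 2 / (8 * s ^ 2) ≤ rexp (a ^ 2 / (8 * s ^ 2)) :=
    Real.add_one_le_exp _ |>.trans_eq' (by ring_nf)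
  have hE' : 8 * s ^ 2 + a ^ 2 ≤ 8 * s ^ 2 * rexp (a ^ 2 / (8 * s ^ 2)) := by
    have h8 : (0:ℝ) < 8 * s ^ 2 := by positivity
    calc 8 * s ^ 2 + a ^ 2 = 8 * s ^ 2 * (1 + a ^ 2 / (8 * s ^ 2)) := by
          field_simp
      _ ≤ 8 * s ^ 2 * rexp (a ^ 2 / (8 * s ^ 2)) := by
          exact mul_le_mul_of_nonneg_left hE h8.le
  set E := rexp (a ^ 2 / (8 * s ^ 2)) with hEdef
  have hEpos : 0 < E := Real.exp_pos _
  have hneg : rexp (-a ^ 2 / (8 * s ^ 2)) = E⁻¹ := by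
    rw [hEdef, ← Real.exp_neg]; ring_nf
  rw [hneg]
  rw [mul_inv_le_iff₀ hEpos]
  -- goal: a ≤ c * s * E
  have e1 : Real.sqrt 2 * (8 * s ^ 2 + a ^ 2) ≤ Real.sqrt 2 * (8 * s ^ 2 * E) :=
    mul_le_mul_of_nonneg_left hE' hsq2n
  have e2 : 8 * s * a ≤ Real.sqrt 2 * (8 * s ^ 2 + a ^ 2) := by
    have h := mul_nonneg hsq2n (sq_nonneg (2 * Real.sqrt 2 * s - a))
    have expand : Real.sqrt 2 * (2 * Real.sqrt 2 * s - a) ^ 2 =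
        Real.sqrt 2 * (8 * s ^ 2 + a ^ 2) - 8 * s * a := by
      linear_combination (4 * s ^ 2 * Real.sqrt 2 - 4 * s * a) * hsq2
    linarith
  have key : 8 * s * a ≤ Real.sqrt 2 * (8 * s ^ 2 * E) := e1.trans' e2
  have e3 : a ≤ Real.sqrt 2 * s * E := by nlinarith [key, hs, mul_pos hs hEpos]
  have e4 : Real.sqrt 2 * s * E ≤ c * s * E :=
    mul_le_mul_of_nonneg_right (mul_le_mul_of_nonneg_right hc2 hs.le) hEpos.le
  linarith

lemma stmt_10_pdf_bound (a : ℝ) (ha : 0 < a) (ν : NNReal) (hν : ν ≠ 0)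
    (x : ℝ) (hx : a / 2 ≤ x) :
    gaussianPDFReal 0 (ν ^ 2) x ≤ 1 / a := by
  have hs : (0:ℝ) < (ν : ℝ) := lt_of_le_of_ne (ν.coe_nonneg) (by
    exact_mod_cast (Ne.symm hν))
  have hsqrt : Real.sqrt (2 * Real.pi * ((ν ^ 2 : NNReal) : ℝ)) =
      Real.sqrt (2 * Real.pi) * (ν : ℝ) := by
    push_cast
    rw [Real.sqrt_mul (by positivity), Real.sqrt_sq hs.le]
  rw [gaussianPDFReal]
  rw [hsqrt]
  have hpi : 0 < Real.sqrt (2 * Real.pi) := Real.sqrt_pos.mpr (by positivity)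
  have hx2 : a ^ 2 / 4 ≤ (x - 0) ^ 2 := by
    have : a / 2 ≤ |x - 0| := by
      rw [sub_zero, abs_of_pos (lt_of_lt_of_le (by linarith) hx)]; exact hx
    nlinarith [abs_nonneg (x - 0), sq_abs (x - 0)]
  have hcast : ((ν ^ 2 : NNReal) : ℝ) = (ν : ℝ) ^ 2 := by push_cast; ring
  have hexp : rexp (-(x - 0) ^ 2 / (2 * ((ν ^ 2 : NNReal) : ℝ))) ≤
      rexp (-a ^ 2 / (8 * (ν : ℝ) ^ 2)) := by
    apply Real.exp_le_exp.mpr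
    rw [hcast]
    rw [div_le_div_iff₀ (by positivity) (by positivity)]
    nlinarith [hx2]
  calc (Real.sqrt (2 * Real.pi) * (ν : ℝ))⁻¹ * rexp (-(x - 0) ^ 2 / (2 * ((ν ^ 2 : NNReal) : ℝ)))
      ≤ (Real.sqrt (2 * Real.pi) * (ν : ℝ))⁻¹ * rexp (-a ^ 2 / (8 * (ν : ℝ) ^ 2)) := by
        apply mul_le_mul_of_nonneg_left hexp (by positivity)
    _ ≤ 1 / a := by
        rw [inv_mul_le_iff₀ (by positivity), mul_one_div, le_div_iff₀ ha]
        have := stmt_10_aux a ha (ν : ℝ) hs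
        nlinarith

/-- Gaussian anti-concentration: there is a universal constant `c > 0` such
that for all `a > 0`, all variances `ν² ≥ 0` and all `δ ∈ [0,1]`, a `N(0, ν²)` random
variable `u` satisfies `P(|u − a| ≤ c δ a) ≤ δ`. (For `ν = 0`, `gaussianReal 0 0` is the
Dirac mass at `0`.) -/
theorem stmt_10 : ∃ c : ℝ, 0 < c ∧
    ∀ (a : ℝ), 0 < a → ∀ (ν : NNReal) (δ : ℝ), 0 ≤ δ → δ ≤ 1 →
      gaussianReal 0 (ν ^ 2) {u : ℝ | |u - a| ≤ c * δ * a} ≤ ENNReal.ofReal δ := by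
  refine ⟨1/2, by norm_num, fun a ha ν δ hδ0 hδ1 => ?_⟩
  set r : ℝ := 1/2 * δ * a with hr
  have hr0 : 0 ≤ r := by positivity
  have hra : r ≤ a / 2 := by rw [hr]; nlinarith
  have hset : {u : ℝ | |u - a| ≤ 1/2 * δ * a} = Set.Icc (a - r) (a + r) := by
    ext u
    simp only [Set.mem_setOf_eq, abs_le, Set.mem_Icc, ← hr]
    constructor <;> intro h <;> exact ⟨by linarith [h.1, h.2], by linarith [h.1, h.2]⟩
  rw [hset]
  by_cases hν : ν = 0
  · subst hν
    have : (0:NNReal) ^ 2 = 0 := by norm_num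
    rw [this, gaussianReal_zero_var]
    rw [Measure.dirac_apply' _ measurableSet_Icc]
    have h0 : (0:ℝ) ∉ Set.Icc (a - r) (a + r) := by
      simp only [Set.mem_Icc, not_and]
      intro h; linarith
    rw [Set.indicator_of_notMem h0]
    exact zero_le
  · have hν2 : ν ^ 2 ≠ 0 := pow_ne_zero 2 hν
    rw [gaussianReal_apply 0 hν2]
    have hbound : ∀ x ∈ Set.Icc (a - r) (a + r),
        gaussianPDF 0 (ν ^ 2) x ≤ ENNReal.ofReal (1 / a) := by
      intro x hx
      rw [gaussianPDF]
      apply ENNReal.ofReal_le_ofReal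
      exact stmt_10_pdf_bound a ha ν hν x (by linarith [hx.1])
    calc ∫⁻ x in Set.Icc (a - r) (a + r), gaussianPDF 0 (ν ^ 2) x
        ≤ ∫⁻ _ in Set.Icc (a - r) (a + r), ENNReal.ofReal (1 / a) :=
          setLIntegral_mono (by measurability) hbound
      _ = ENNReal.ofReal (1 / a) * volume (Set.Icc (a - r) (a + r)) :=
          setLIntegral_const _ _
      _ = ENNReal.ofReal (1 / a) * ENNReal.ofReal (δ * a) := by
          rw [Real.volume_Icc]
          congr 1
          rw [hr]; ring_nf
      _ = ENNReal.ofReal δ := by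
          rw [← ENNReal.ofReal_mul (by positivity)]
          congr 1
          field_simp
end

section
/- There exists a universal constant c > 0 such that for every k ≥ 1, every v* ∈ ℝ^k with v* ≠ 0, every σ > 0, and every δ ∈ [0, 1], if v₀ ∈ ℝ^k is a random vector whose coordinates are independent and each distributed N(0, σ²), then with probability at least 1 − δ: |(⟨v₀, v*⟩)² − (⟨v*, v*⟩)²| ≥ c δ (⟨v*, v*⟩)². -/
open ProbabilityTheory MeasureTheory Matrix Real Set
open scoped NNReal ENNReal

lemma gauss_integrand_eq (s t : ℝ≥0) (hs : s ≠ 0) (ht : t ≠ 0) (z x : ℝ) :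
    gaussianPDFReal 0 s x * gaussianPDFReal x t z
      = ((√(2*π*(s:ℝ)))⁻¹ * (√(2*π*(t:ℝ)))⁻¹ * rexp (-z^2/(2*((s:ℝ)+t)))) *
        rexp (-(((s:ℝ)+t)/(2*s*t)) * (x - s*z/((s:ℝ)+t))^2) := by
  have hs' : (0:ℝ) < s := lt_of_le_of_ne s.coe_nonneg (by exact_mod_cast (Ne.symm hs))
  have ht' : (0:ℝ) < t := lt_of_le_of_ne t.coe_nonneg (by exact_mod_cast (Ne.symm ht))
  have hE : (-(x-0)^2/(2*(s:ℝ))) + (-(z-x)^2/(2*(t:ℝ)))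
      = (-z^2/(2*((s:ℝ)+t))) + (-(((s:ℝ)+t)/(2*s*t)) * (x - s*z/((s:ℝ)+t))^2) := by
    field_simp
    ring
  simp only [gaussianPDFReal]
  calc (√(2*π*(s:ℝ)))⁻¹ * rexp (-(x-0)^2/(2*(s:ℝ))) * ((√(2*π*(t:ℝ)))⁻¹ * rexp (-(z-x)^2/(2*(t:ℝ))))
      = (√(2*π*(s:ℝ)))⁻¹ * (√(2*π*(t:ℝ)))⁻¹ * rexp ((-(x-0)^2/(2*(s:ℝ))) + (-(z-x)^2/(2*(t:ℝ)))) := by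
        rw [Real.exp_add]; ring
    _ = _ := by rw [hE, Real.exp_add]; ring

lemma gauss_integrand_integrable (s t : ℝ≥0) (hs : s ≠ 0) (ht : t ≠ 0) (z : ℝ) :
    Integrable (fun x => gaussianPDFReal 0 s x * gaussianPDFReal x t z) := by
  have hs' : (0:ℝ) < s := lt_of_le_of_ne s.coe_nonneg (by exact_mod_cast (Ne.symm hs))
  have ht' : (0:ℝ) < t := lt_of_le_of_ne t.coe_nonneg (by exact_mod_cast (Ne.symm ht))
  have hb : (0:ℝ) < ((s:ℝ)+t)/(2*s*t) := by positivity
  simp only [gauss_integrand_eq s t hs ht z]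
  exact ((integrable_exp_neg_mul_sq hb).comp_sub_right ((s:ℝ)*z/((s:ℝ)+t))).const_mul _

lemma gauss_conv_pdf (s t : ℝ≥0) (hs : s ≠ 0) (ht : t ≠ 0) (z : ℝ) :
    ∫ x, gaussianPDFReal 0 s x * gaussianPDFReal x t z = gaussianPDFReal 0 (s + t) z := by
  have hs' : (0:ℝ) < s := lt_of_le_of_ne s.coe_nonneg (by exact_mod_cast (Ne.symm hs))
  have ht' : (0:ℝ) < t := lt_of_le_of_ne t.coe_nonneg (by exact_mod_cast (Ne.symm ht))
  have hb : (0:ℝ) < ((s:ℝ)+t)/(2*s*t) := by positivity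
  simp only [gauss_integrand_eq s t hs ht z]
  rw [MeasureTheory.integral_const_mul]
  rw [integral_sub_right_eq_self (fun x => rexp (-(((s:ℝ)+t)/(2*s*t)) * x^2)) ((s:ℝ)*z/((s:ℝ)+t))]
  rw [integral_gaussian]
  have hconst : (√(2*π*(s:ℝ)))⁻¹ * (√(2*π*(t:ℝ)))⁻¹ * √(π / (((s:ℝ)+t)/(2*s*t)))
      = (√(2*π*((s:ℝ)+t)))⁻¹ := by
    rw [← Real.sqrt_inv, ← Real.sqrt_inv, ← Real.sqrt_mul (by positivity),
      ← Real.sqrt_mul (by positivity), ← Real.sqrt_inv]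
    congr 1
    field_simp
  simp only [gaussianPDFReal, NNReal.coe_add, sub_zero]
  calc (√(2*π*(s:ℝ)))⁻¹ * (√(2*π*(t:ℝ)))⁻¹ * rexp (-z^2/(2*((s:ℝ)+t))) * √(π / (((s:ℝ)+t)/(2*s*t)))
      = ((√(2*π*(s:ℝ)))⁻¹ * (√(2*π*(t:ℝ)))⁻¹ * √(π / (((s:ℝ)+t)/(2*s*t)))) * rexp (-z^2/(2*((s:ℝ)+t))) := by ring
    _ = (√(2*π*((s:ℝ)+t)))⁻¹ * rexp (-z^2/(2*((s:ℝ)+t))) := by rw [hconst]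

lemma measurable_gauss_kernel (t : ℝ≥0) : Measurable (fun p : ℝ × ℝ => gaussianPDF p.1 t p.2) := by
  simp only [gaussianPDF, gaussianPDFReal]
  fun_prop

lemma gauss_conv (s t : ℝ≥0) :
    ((gaussianReal 0 s).prod (gaussianReal 0 t)).map (fun p : ℝ × ℝ => p.1 + p.2)
      = gaussianReal 0 (s + t) := by
  by_cases hs : s = 0
  · subst hs
    rw [gaussianReal_zero_var, Measure.dirac_prod,
      Measure.map_map (by fun_prop) (by fun_prop)]
    have : ((fun p : ℝ × ℝ => p.1 + p.2) ∘ (Prod.mk (0:ℝ))) = id := by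
      ext y; simp
    rw [this, Measure.map_id, zero_add]
  by_cases ht : t = 0
  · subst ht
    rw [gaussianReal_zero_var, Measure.prod_dirac,
      Measure.map_map (by fun_prop) (by fun_prop)]
    have : ((fun p : ℝ × ℝ => p.1 + p.2) ∘ (fun x : ℝ => (x, (0:ℝ)))) = id := by
      ext y; simp
    rw [this, Measure.map_id, add_zero]
  have hst : s + t ≠ 0 := by simp [hs]
  ext A hA
  rw [Measure.map_apply (by fun_prop) hA,
    Measure.prod_apply ((by fun_prop : Measurable fun p : ℝ × ℝ => p.1 + p.2) hA)]
  have h1 : ∀ x : ℝ, (gaussianReal 0 t) (Prod.mk x ⁻¹' ((fun p : ℝ × ℝ => p.1 + p.2) ⁻¹' A))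
      = ∫⁻ z in A, gaussianPDF x t z := by
    intro x
    have hpre : (Prod.mk x ⁻¹' ((fun p : ℝ × ℝ => p.1 + p.2) ⁻¹' A)) = (fun y => y + x) ⁻¹' A := by
      ext y; simp [add_comm]
    rw [hpre, ← Measure.map_apply (by fun_prop) hA, gaussianReal_map_add_const x, zero_add,
      gaussianReal_apply x ht A]
  simp only [h1]
  rw [gaussianReal_of_var_ne_zero 0 hs,
    lintegral_withDensity_eq_lintegral_mul _ (measurable_gaussianPDF 0 s)
      (by exact Measurable.lintegral_prod_right (f := fun x z => gaussianPDF x t z) (measurable_gauss_kernel t))]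
  have h2 : ∀ x : ℝ, (gaussianPDF 0 s * fun x => ∫⁻ z in A, gaussianPDF x t z) x
      = ∫⁻ z in A, gaussianPDF 0 s x * gaussianPDF x t z := by
    intro x
    simp only [Pi.mul_apply]
    exact (lintegral_const_mul' _ _ ENNReal.ofReal_ne_top).symm
  rw [lintegral_congr h2, lintegral_lintegral_swap]
  swap
  · exact ((measurable_gaussianPDF 0 s).comp measurable_fst |>.mul
      ((measurable_gauss_kernel t).comp (measurable_fst.prodMk measurable_snd))).aemeasurable
  rw [gaussianReal_apply 0 hst A]
  refine lintegral_congr_ae (ae_restrict_of_ae (ae_of_all _ fun z => ?_))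
  have : ∀ x : ℝ, gaussianPDF 0 s x * gaussianPDF x t z
      = ENNReal.ofReal (gaussianPDFReal 0 s x * gaussianPDFReal x t z) := by
    intro x
    rw [gaussianPDF, gaussianPDF, ← ENNReal.ofReal_mul (gaussianPDFReal_nonneg 0 s x)]
  simp only [this]
  rw [← ofReal_integral_eq_lintegral_ofReal (gauss_integrand_integrable s t hs ht z)
    (ae_of_all _ fun x => mul_nonneg (gaussianPDFReal_nonneg _ _ _) (gaussianPDFReal_nonneg _ _ _)),
    gauss_conv_pdf s t hs ht z]
  rfl


lemma measurable_sumw {k : ℕ} (w : Fin k → ℝ) :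
    Measurable (fun x : Fin k → ℝ => ∑ i, x i * w i) :=
  Finset.measurable_sum _ (fun i _ => (measurable_pi_apply i).mul_const _)

lemma toNNReal_sq (c : ℝ) : (c^2).toNNReal = (⟨c^2, sq_nonneg c⟩ : ℝ≥0) := by
  ext; simp [Real.coe_toNNReal _ (sq_nonneg c)]; rfl


lemma pi_map_dot (V : ℝ≥0) : ∀ (k : ℕ) (w : Fin k → ℝ),
    (Measure.pi fun _ : Fin k => gaussianReal 0 V).map (fun x => ∑ i, x i * w i)
      = gaussianReal 0 ((∑ i, ((w i)^2).toNNReal) * V)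
  | 0, w => by
      have h0 : (fun x : Fin 0 → ℝ => ∑ i, x i * w i) = fun _ => 0 := by
        ext x; simp
      rw [h0, Measure.map_const, measure_univ, one_smul]
      simp
  | (n+1), w => by
      have IH := pi_map_dot V n (fun j => w j.succ)
      have MP := measurePreserving_piFinSuccAbove (fun _ : Fin (n+1) => gaussianReal 0 V) 0
      have hcomp : (fun x : Fin (n+1) → ℝ => ∑ i, x i * w i)
          = ((fun q : ℝ × ℝ => q.1 + q.2)
              ∘ (Prod.map (fun x : ℝ => x * w 0) (fun y : Fin n → ℝ => ∑ j, y j * w j.succ)))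
            ∘ (MeasurableEquiv.piFinSuccAbove (fun _ : Fin (n+1) => ℝ) 0) := by
        ext x
        simp [MeasurableEquiv.piFinSuccAbove, Fin.insertNthEquiv, Fin.sum_univ_succ, Fin.tail]
      rw [hcomp, ← Measure.map_map (by fun_prop) (MeasurableEquiv.measurable _), MP.map_eq,
        ← Measure.map_map (f := Prod.map (fun x : ℝ => x * w 0)
            (fun y : Fin n → ℝ => ∑ j, y j * w j.succ)) (by fun_prop) (by fun_prop),
        ← Measure.map_prod_map _ _ (by fun_prop : Measurable fun x : ℝ => x * w 0)
          (measurable_sumw _),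
        IH]
      have hmul : (gaussianReal 0 V).map (fun x : ℝ => x * w 0)
          = gaussianReal 0 ((w 0 ^ 2).toNNReal * V) := by
        rw [show (fun x : ℝ => x * w 0) = (· * w 0) from rfl, gaussianReal_map_mul_const,
          mul_zero, toNNReal_sq]
        rfl
      rw [hmul, gauss_conv]
      congr 1
      rw [Fin.sum_univ_succ, add_mul]


set_option maxHeartbeats 1000000 in
lemma oneD (V : ℝ≥0) (hV : V ≠ 0) (a u : ℝ) (ha : 0 < a) (hu0 : 0 ≤ u) (hu : u ≤ 1/2) :
    gaussianReal 0 V {y : ℝ | |y ^ 2 - a ^ 2| < u * a ^ 2} ≤ ENNReal.ofReal (2 * u) := by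
  have hVpos : (0:ℝ) < V := by positivity
  set p := a * Real.sqrt (1 - u) with hp
  set q := a * Real.sqrt (1 + u) with hq
  have hp_eq : p = Real.sqrt (a^2 * (1-u)) := by
    rw [Real.sqrt_mul (sq_nonneg a), Real.sqrt_sq ha.le]
  have hq_eq : q = Real.sqrt (a^2 * (1+u)) := by
    rw [Real.sqrt_mul (sq_nonneg a), Real.sqrt_sq ha.le]
  have hp0 : 0 ≤ p := by positivity
  have hsub : {y : ℝ | |y ^ 2 - a ^ 2| < u * a ^ 2} ⊆ Icc (-q) (-p) ∪ Icc p q := by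
    intro y hy
    simp only [mem_setOf_eq, abs_lt] at hy
    have h1 : a^2 * (1-u) ≤ y^2 := by nlinarith [hy.1]
    have h2 : y^2 ≤ a^2 * (1+u) := by nlinarith [hy.2]
    have hyp : p ≤ |y| := by
      rw [hp_eq, ← Real.sqrt_sq_eq_abs]; exact Real.sqrt_le_sqrt h1
    have hyq : |y| ≤ q := by
      rw [hq_eq, ← Real.sqrt_sq_eq_abs]; exact Real.sqrt_le_sqrt h2
    rcases le_or_gt 0 y with hy0 | hy0
    · right; rw [abs_of_nonneg hy0] at hyp hyq; exact ⟨hyp, hyq⟩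
    · left; rw [abs_of_neg hy0] at hyp hyq; constructor <;> linarith
  refine le_trans (measure_mono hsub) ?_
  rw [gaussianReal_apply 0 hV _]
  set C : ℝ := (√(2*π*(V:ℝ)))⁻¹ * rexp (-(a^2/2) / (2*(V:ℝ))) with hC
  have hC0 : 0 ≤ C := by positivity
  have hpq : p ≤ q := by
    apply mul_le_mul_of_nonneg_left (Real.sqrt_le_sqrt (by linarith)) ha.le
  have hpdf : ∀ y ∈ Icc (-q) (-p) ∪ Icc p q, gaussianPDF 0 V y ≤ ENNReal.ofReal C := by
    intro y hy
    have hyp : p ≤ |y| := by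
      rcases hy with h | h
      · rw [abs_of_nonpos (by linarith [h.2] : y ≤ 0)]; linarith [h.2]
      · rw [abs_of_nonneg (by linarith [h.1] : 0 ≤ y)]; exact h.1
    have hy2 : a^2/2 ≤ y^2 := by
      have hpy : p^2 ≤ y^2 := by
        rw [← Real.sqrt_sq_eq_abs] at hyp
        have := Real.sqrt_le_sqrt (le_of_eq (Real.sq_sqrt (sq_nonneg y)).symm)
        nlinarith [hyp, Real.sqrt_nonneg (y^2), Real.sq_sqrt (sq_nonneg y)]
      have hp2 : p^2 = a^2 * (1-u) := by
        rw [hp, mul_pow, Real.sq_sqrt (by linarith)]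
      nlinarith
    rw [gaussianPDF]
    apply ENNReal.ofReal_le_ofReal
    rw [gaussianPDFReal, hC]
    have : rexp (-(y-0)^2 / (2*(V:ℝ))) ≤ rexp (-(a^2/2) / (2*(V:ℝ))) := by
      apply Real.exp_le_exp.mpr
      rw [div_le_div_iff_of_pos_right (by positivity)]
      simp only [sub_zero]
      linarith
    exact mul_le_mul_of_nonneg_left this (by positivity)
  calc ∫⁻ y in Icc (-q) (-p) ∪ Icc p q, gaussianPDF 0 V y
      ≤ ∫⁻ _ in Icc (-q) (-p) ∪ Icc p q, ENNReal.ofReal C :=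
        setLIntegral_mono measurable_const hpdf
    _ = ENNReal.ofReal C * volume (Icc (-q) (-p) ∪ Icc p q) := setLIntegral_const _ _
    _ ≤ ENNReal.ofReal C * (volume (Icc (-q) (-p)) + volume (Icc p q)) :=
        mul_le_mul_right (measure_union_le _ _) _
    _ = ENNReal.ofReal C * ENNReal.ofReal (2 * (q - p)) := by
        rw [Real.volume_Icc, Real.volume_Icc,
          show -p - -q = q - p by ring,
          ← ENNReal.ofReal_add (by linarith [hpq]) (by linarith [hpq]),
          show (q - p) + (q - p) = 2*(q-p) by ring]
    _ ≤ ENNReal.ofReal (2 * u) := by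
        rw [← ENNReal.ofReal_mul hC0]
        apply ENNReal.ofReal_le_ofReal
        -- real inequality: C * (2*(q-p)) ≤ 2*u
        set sv := Real.sqrt (V:ℝ) with hsv
        have hsv0 : 0 < sv := Real.sqrt_pos.mpr hVpos
        have hsv2 : sv^2 = (V:ℝ) := Real.sq_sqrt hVpos.le
        have hqp : q - p ≤ 3/2 * u * a := by
          have h1 : Real.sqrt (1+u) ≤ 1 + u/2 := by
            rw [show (1 + u/2 : ℝ) = Real.sqrt ((1+u/2)^2) from
              (Real.sqrt_sq (by linarith)).symm]
            exact Real.sqrt_le_sqrt (by nlinarith)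
          have h2 : 1 - u ≤ Real.sqrt (1-u) := by
            nth_rewrite 1 [show (1 - u : ℝ) = Real.sqrt ((1-u)^2) from
              (Real.sqrt_sq (by linarith)).symm]
            exact Real.sqrt_le_sqrt (by nlinarith)
          rw [hq, hp]
          nlinarith
        have hkey : a * rexp (-(a^2/2) / (2*(V:ℝ))) ≤ sv := by
          have hexp_eq : -(a^2/2) / (2*(V:ℝ)) = -((a/sv)^2/4) := by
            rw [← hsv2]; field_simp; ring
          rw [hexp_eq]
          set T : ℝ := a / sv with hT
          have hT0 : 0 < T := by positivity
          have h3 : T ≤ rexp (T^2/4) := by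
            have := Real.add_one_le_exp (T^2/4)
            nlinarith [this, sq_nonneg (T - 2)]
          have ha_eq : a = T * sv := by rw [hT, div_mul_cancel₀ _ hsv0.ne']
          rw [ha_eq, Real.exp_neg]
          calc T * sv * (rexp (T^2/4))⁻¹ ≤ rexp (T^2/4) * sv * (rexp (T^2/4))⁻¹ := by
                apply mul_le_mul_of_nonneg_right (mul_le_mul_of_nonneg_right h3 hsv0.le)
                positivity
            _ = sv := by field_simp
        have hsqrt_mul : √(2*π*(V:ℝ)) = √(2*π) * sv := by
          rw [hsv, ← Real.sqrt_mul (by positivity)]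
        have h2pi : 2 ≤ √(2*π) := by
          have h4 : (4:ℝ) ≤ 2*π := by nlinarith [Real.pi_gt_three]
          have hs4 : Real.sqrt 4 = 2 := by
            rw [show (4:ℝ) = 2^2 by norm_num]; exact Real.sqrt_sq (by norm_num)
          have := Real.sqrt_le_sqrt h4
          linarith
        have hs2pi : 0 < √(2*π) := by positivity
        calc C * (2*(q-p)) = (√(2*π*(V:ℝ)))⁻¹ * rexp (-(a^2/2) / (2*(V:ℝ))) * (2*(q-p)) := by
              rw [hC]
          _ ≤ (√(2*π*(V:ℝ)))⁻¹ * rexp (-(a^2/2) / (2*(V:ℝ))) * (2*(3/2 * u * a)) := by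
              apply mul_le_mul_of_nonneg_left (by linarith) (by positivity)
          _ = 3*u * (a * rexp (-(a^2/2) / (2*(V:ℝ)))) * (√(2*π*(V:ℝ)))⁻¹ := by ring
          _ ≤ 3*u * sv * (√(2*π*(V:ℝ)))⁻¹ := by
              apply mul_le_mul_of_nonneg_right (mul_le_mul_of_nonneg_left hkey (by positivity))
              positivity
          _ = 3*u / √(2*π) := by
              rw [hsqrt_mul]; field_simp
          _ ≤ 3*u / 2 := by
              apply div_le_div_of_nonneg_left (by linarith) (by norm_num) h2pi
          _ ≤ 2*u := by linarith

set_option maxHeartbeats 1000000 in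
/-- with probability at least `1 − δ` over a Gaussian head initialization
`v₀ ∼ N(0, σ² I_k)`, the squared head error satisfies
`|⟨v₀, v*⟩² − ⟨v*, v*⟩²| ≥ c δ ⟨v*, v*⟩²` for a universal constant `c > 0`. -/
theorem stmt_11 : ∃ c : ℝ, 0 < c ∧
    ∀ (k : ℕ), 1 ≤ k → ∀ (vstar : Fin k → ℝ), vstar ≠ 0 →
    ∀ (σ : NNReal), 0 < σ → ∀ (δ : ℝ), 0 ≤ δ → δ ≤ 1 →
      1 - ENNReal.ofReal δ ≤
        Measure.pi (fun _ : Fin k => gaussianReal 0 (σ ^ 2))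
          {v0 : Fin k → ℝ |
            c * δ * (vstar ⬝ᵥ vstar) ^ 2 ≤ |(v0 ⬝ᵥ vstar) ^ 2 - (vstar ⬝ᵥ vstar) ^ 2|} := by
  refine ⟨1/4, by norm_num, ?_⟩
  intro k hk vstar hv σ hσ δ hδ0 hδ1
  set μ := Measure.pi (fun _ : Fin k => gaussianReal 0 (σ ^ 2)) with hμ
  obtain ⟨i, hi⟩ := Function.ne_iff.mp hv
  set a : ℝ := vstar ⬝ᵥ vstar with hadef
  have ha : 0 < a := by
    rw [hadef]
    exact Finset.sum_pos' (fun j _ => mul_self_nonneg _)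
      ⟨i, Finset.mem_univ i, mul_self_pos.mpr hi⟩
  set V : ℝ≥0 := (∑ j, ((vstar j)^2).toNNReal) * σ^2 with hV
  have hVne : V ≠ 0 := by
    apply mul_ne_zero
    · have hpos : 0 < ((vstar i)^2).toNNReal := Real.toNNReal_pos.mpr (lt_of_le_of_ne (sq_nonneg _) (Ne.symm (pow_ne_zero 2 hi)))
      exact (Finset.sum_pos' (fun j _ => zero_le) ⟨i, Finset.mem_univ i, hpos⟩).ne'
    · exact pow_ne_zero 2 (by exact_mod_cast hσ.ne')
  have hL : Measurable (fun v0 : Fin k → ℝ => v0 ⬝ᵥ vstar) := measurable_sumw vstar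
  have hmap : μ.map (fun v0 => v0 ⬝ᵥ vstar) = gaussianReal 0 V := by
    rw [hμ, hV]
    exact pi_map_dot (σ^2) k vstar
  set T : Set ℝ := {y | 1/4 * δ * a^2 ≤ |y^2 - a^2|} with hT
  have hTm : MeasurableSet T :=
    measurableSet_le measurable_const (((measurable_id.pow_const 2).sub_const _).abs)
  have hG : {v0 : Fin k → ℝ | 1/4 * δ * a^2 ≤ |(v0 ⬝ᵥ vstar)^2 - a^2|}
      = (fun v0 : Fin k → ℝ => v0 ⬝ᵥ vstar) ⁻¹' T := rfl
  rw [hG]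
  have hGm : MeasurableSet ((fun v0 : Fin k → ℝ => v0 ⬝ᵥ vstar) ⁻¹' T) := hL hTm
  have hcompl : μ (((fun v0 : Fin k → ℝ => v0 ⬝ᵥ vstar) ⁻¹' T)ᶜ) ≤ ENNReal.ofReal δ := by
    rw [← Set.preimage_compl, ← Measure.map_apply hL hTm.compl, hmap]
    have hTc : Tᶜ = {y : ℝ | |y^2 - a^2| < 1/4 * δ * a^2} := by
      ext y; simp [hT, not_le]
    rw [hTc]
    refine le_trans (oneD V hVne a (1/4*δ) ha (by linarith) (by linarith)) ?_
    exact ENNReal.ofReal_le_ofReal (by linarith)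
  haveI : IsProbabilityMeasure μ := by rw [hμ]; infer_instance
  rw [tsub_le_iff_right]
  calc (1 : ℝ≥0∞) = μ ((fun v0 : Fin k → ℝ => v0 ⬝ᵥ vstar) ⁻¹' T)
        + μ (((fun v0 : Fin k → ℝ => v0 ⬝ᵥ vstar) ⁻¹' T)ᶜ) := by
        rw [measure_add_measure_compl hGm, measure_univ]
    _ ≤ _ + ENNReal.ofReal δ := add_le_add_right hcompl _
end
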